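/- arXiv:1610.03959 — 7 statements merged into one kernel-verified Lean document; each statement's English description precedes it below -/
import Mathlib

section
/- For every N-E lattice path P from (0,0) to (mn,n) with step sequence (s_1,...,s_n), there exists a unique index 0 ≤ i_0 ≤ n-1 such that the i_0-th cyclic permutation d_{i_0}(P), with step sequence (0, s_{i_0+2}-s_{i_0+1}, ..., s_n - s_{i_0+1}, s_1+mn+1-s_{i_0+1}, ..., s_{i_0}+mn+1-s_{i_0+1}), is an m-Dyck path of height n (i.e., satisfies the condition that its j-th entry is at most m(j-1) for all j). -/
/-- Cycle lemma: for every N-E lattice path from `(0,0)` to `(mn, n)` with step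
sequence `s` (indexed `1, …, n`, weakly increasing, `0 ≤ s 1`, `s n ≤ mn`),
there is a unique index `0 ≤ i ≤ n-1` such that the `i`-th cyclic permutation,
with `j`-th entry `s (i+j) - s (i+1)` if `i+j ≤ n` and
`s (i+j-n) + mn + 1 - s (i+1)` otherwise, is an m-Dyck path, i.e. its `j`-th
entry is at most `m (j-1)` for all `1 ≤ j ≤ n`. -/
theorem cycle_lemma (m n : ℕ) (hm : 0 < m) (hn : 0 < n)
    (s : ℕ → ℤ) (h0 : 0 ≤ s 1)
    (hmono : ∀ i j, 1 ≤ i → i ≤ j → j ≤ n → s i ≤ s j)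
    (hub : s n ≤ (m : ℤ) * n) :
    ∃! i : ℕ, i ≤ n - 1 ∧ ∀ j, 1 ≤ j → j ≤ n →
      (if i + j ≤ n then s (i + j) - s (i + 1)
       else s (i + j - n) + (m : ℤ) * n + 1 - s (i + 1)) ≤ ((m * (j - 1) : ℕ) : ℤ) := by
  set t : ℕ → ℤ := fun k => if k ≤ n then s k else s (k - n) + m * n + 1 with ht
  set g : ℕ → ℤ := fun k => t k - m * k with hg
  have hgshift : ∀ k, 1 ≤ k → k ≤ n → g (k + n) = g k + 1 := by
    intro k hk1 hkn
    simp only [hg, ht]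
    rw [if_neg (by omega), if_pos hkn]
    have hkk : k + n - n = k := by omega
    rw [hkk]; push_cast; ring
  -- reformulate the Dyck condition in terms of g
  have hcond : ∀ i j : ℕ, i + 1 ≤ n → 1 ≤ j → j ≤ n →
      (((if i + j ≤ n then s (i + j) - s (i + 1)
       else s (i + j - n) + (m : ℤ) * n + 1 - s (i + 1)) ≤ ((m * (j - 1) : ℕ) : ℤ))
       ↔ g (i + j) ≤ g (i + 1)) := by
    intro i j hi hj1 hjn
    have hji : ((m * (j - 1) : ℕ) : ℤ) = m * j - m := by
      push_cast [Nat.cast_sub hj1]; ring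
    have hti1 : g (i + 1) = s (i + 1) - m * (i + 1) := by
      simp only [hg, ht]; rw [if_pos hi]; push_cast; ring
    by_cases h : i + j ≤ n
    · rw [if_pos h]
      have hgij : g (i + j) = s (i + j) - m * (i + j) := by
        simp only [hg, ht]; rw [if_pos h]; push_cast; ring
      rw [hgij, hti1, hji]; push_cast
      constructor <;> intro <;> linarith
    · rw [if_neg h]
      have hgij : g (i + j) = s (i + j - n) + m * n + 1 - m * (i + j) := by
        simp only [hg, ht]; rw [if_neg h]; push_cast; ring
      rw [hgij, hti1, hji]; push_cast
      constructor <;> intro <;> linarith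
  -- first argmax of g on [1,n]
  classical
  have hne : (Finset.Icc 1 n).Nonempty := ⟨1, Finset.mem_Icc.2 ⟨le_refl 1, hn⟩⟩
  obtain ⟨k0, hk0mem, hk0max⟩ := Finset.exists_max_image (Finset.Icc 1 n) g hne
  have hex : ∃ k, 1 ≤ k ∧ k ≤ n ∧ ∀ l ∈ Finset.Icc 1 n, g l ≤ g k := by
    obtain ⟨h1, h2⟩ := Finset.mem_Icc.1 hk0mem
    exact ⟨k0, h1, h2, hk0max⟩
  have hspec := Nat.find_spec hex
  set i1 : ℕ := Nat.find hex with hi1def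
  obtain ⟨hi1lb, hi1ub, hi1max⟩ := hspec
  have hless : ∀ k, 1 ≤ k → k < i1 → g k < g i1 := by
    intro k hk1 hki
    have hnk := Nat.find_min hex hki
    push_neg at hnk
    obtain ⟨l, hlmem, hlk⟩ := hnk hk1 (by omega)
    exact lt_of_lt_of_le hlk (hi1max l hlmem)
  -- characterization of valid shifts
  have hchar : ∀ i : ℕ, i + 1 ≤ n →
      ((∀ j, 1 ≤ j → j ≤ n → g (i + j) ≤ g (i + 1)) ↔ i + 1 = i1) := by
    intro i hi
    constructor
    · intro hcnd
      have hstrict : ∀ l, 1 ≤ l → l ≤ i → g l < g (i + 1) := by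
        intro l hl1 hli
        have hj1 : 1 ≤ l + n - i := by omega
        have hjn : l + n - i ≤ n := by omega
        have := hcnd (l + n - i) hj1 hjn
        have heq : i + (l + n - i) = l + n := by omega
        rw [heq, hgshift l hl1 (by omega)] at this
        omega
      have hmemA : ∀ l ∈ Finset.Icc 1 n, g l ≤ g (i + 1) := by
        intro l hlmem
        obtain ⟨hl1, hln⟩ := Finset.mem_Icc.1 hlmem
        by_cases hli : l ≤ i
        · exact le_of_lt (hstrict l hl1 hli)
        · have := hcnd (l - i) (by omega) (by omega)
          have heq : i + (l - i) = l := by omega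
          rwa [heq] at this
      have h1 : i1 ≤ i + 1 := by
        rw [hi1def]; exact Nat.find_le ⟨by omega, by omega, hmemA⟩
      rcases eq_or_lt_of_le h1 with h | h
      · omega
      · exfalso
        have := hstrict i1 hi1lb (by omega)
        have := hi1max (i + 1) (Finset.mem_Icc.2 ⟨by omega, hi⟩)
        omega
    · intro heq j hj1 hjn
      by_cases h : i + j ≤ n
      · rw [heq]
        exact hi1max (i + j) (Finset.mem_Icc.2 ⟨by omega, h⟩)
      · have hk1 : 1 ≤ i + j - n := by omega
        have hki : i + j - n ≤ i := by omega
        have heq2 : i + j = (i + j - n) + n := by omega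
        rw [heq2, hgshift (i + j - n) hk1 (by omega), heq]
        have := hless (i + j - n) hk1 (by omega)
        omega
  -- conclude
  refine ⟨i1 - 1, ⟨by omega, ?_⟩, ?_⟩
  · intro j hj1 hjn
    have h1 : i1 - 1 + 1 = i1 := by omega
    rw [hcond (i1 - 1) j (by omega) hj1 hjn]
    exact (hchar (i1 - 1) (by omega)).2 h1 j hj1 hjn
  · rintro i' ⟨hi'le, hi'cond⟩
    have hi'1 : i' + 1 ≤ n := by omega
    have : i' + 1 = i1 := by
      refine (hchar i' hi'1).1 ?_
      intro j hj1 hjn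
      exact (hcond i' j hi'1 hj1 hjn).1 (hi'cond j hj1 hjn)
    omega
end

section
/- The map h sending a lattice path P from (0,0) to (mn,n) to the pair (d_{i_0}(P), s_{i_0+1}) — where i_0 is the unique index such that d_{i_0}(P) is an m-Dyck path — is a bijection between the set of N-E lattice paths from (0,0) to (mn,n) and the set of pairs (D, k) where D is an m-Dyck path of height n and k ∈ {0, 1, ..., mn}. -/
namespace CycleLemmaAux

variable (m n : ℕ)

def shift (s : Fin n → ℤ) (i : Fin n) : Fin n → ℤ := fun j : Fin n =>
  if hij : (i : ℕ) + (j : ℕ) < n then s ⟨(i : ℕ) + (j : ℕ), hij⟩ - s i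
  else s ⟨(i : ℕ) + (j : ℕ) - n,
      by have h1 := i.isLt; have h2 := j.isLt; omega⟩ + (m : ℤ) * n + 1 - s i

def idx (t : Fin n → ℤ) (k : ℤ) : ℕ :=
  (Finset.univ.filter fun j : Fin n => (m : ℤ) * n - k < t j).card

lemma idx_le (t : Fin n → ℤ) (k : ℤ) : idx m n t k ≤ n := by
  classical
  calc idx m n t k ≤ Finset.univ.card := Finset.card_filter_le _ _
    _ = n := by simp

def unshift' (t : Fin n → ℤ) (k : ℤ) (i : ℕ) (hi : i ≤ n) : Fin n → ℤ := fun l =>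
  if _h : i ≤ (l : ℕ) then t ⟨(l : ℕ) - i, by have := l.isLt; omega⟩ + k
  else t ⟨(l : ℕ) + n - i, by have := l.isLt; omega⟩ + k - (m : ℤ) * n - 1

lemma unshift'_congr (t : Fin n → ℤ) (k : ℤ) {i i' : ℕ} (hi : i ≤ n) (hi' : i' ≤ n)
    (h : i = i') : unshift' m n t k i hi = unshift' m n t k i' hi' := by subst h; rfl

lemma card_filter_le_val (a : ℕ) :
    (Finset.univ.filter fun j : Fin n => a ≤ (j : ℕ)).card = n - a := by
  classical
  rcases lt_or_ge a n with h | h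
  · have : (Finset.univ.filter fun j : Fin n => a ≤ (j : ℕ)) = Finset.Ici (⟨a, h⟩ : Fin n) := by
      ext j; simp [Fin.le_def]
    rw [this, Fin.card_Ici]
  · have : (Finset.univ.filter fun j : Fin n => a ≤ (j : ℕ)) = ∅ := by
      ext j; simp only [Finset.mem_filter, Finset.mem_univ, true_and, Finset.notMem_empty,
        iff_false]
      have := j.isLt; omega
    rw [this]; simp; omega

lemma idx_mem_iff (t : Fin n → ℤ) (ht : Monotone t) (k : ℤ) (j : Fin n) :
    (m : ℤ) * n - k < t j ↔ n - idx m n t k ≤ (j : ℕ) := by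
  classical
  set S := Finset.univ.filter fun j : Fin n => (m : ℤ) * n - k < t j with hS
  have hj := j.isLt
  constructor
  · intro h
    have hsub : Finset.Ici j ⊆ S := by
      intro j' hj'
      simp only [hS, Finset.mem_filter, Finset.mem_univ, true_and]
      exact lt_of_lt_of_le h (ht (Finset.mem_Ici.mp hj'))
    have := Finset.card_le_card hsub
    rw [Fin.card_Ici] at this
    have : n - (j : ℕ) ≤ idx m n t k := this
    omega
  · intro h
    by_contra h'
    have hsub : S ⊆ Finset.Ioi j := by
      intro j' hj'
      simp only [hS, Finset.mem_filter, Finset.mem_univ, true_and] at hj'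
      simp only [Finset.mem_Ioi]
      by_contra hle
      push_neg at hle
      exact h' (lt_of_lt_of_le hj' (ht hle))
    have hc := Finset.card_le_card hsub
    rw [Fin.card_Ioi] at hc
    have : idx m n t k ≤ n - 1 - (j : ℕ) := hc
    omega

end CycleLemmaAux

namespace CycleLemmaAux
open Classical in
noncomputable def maxSet (m n : ℕ) (p : Fin n → ℤ) : Finset (Fin n) :=
  Finset.univ.filter fun i : Fin n => ∀ l : Fin n, p l - (m : ℤ) * (l : ℕ) ≤ p i - (m : ℤ) * (i : ℕ)

lemma maxSet_nonempty (m n : ℕ) (hn : 0 < n) (p : Fin n → ℤ) : (maxSet m n p).Nonempty := by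
  classical
  obtain ⟨b, -, hb⟩ := Finset.exists_max_image Finset.univ
    (fun i : Fin n => p i - (m : ℤ) * (i : ℕ)) ⟨⟨0, hn⟩, Finset.mem_univ _⟩
  refine ⟨b, ?_⟩
  simp only [maxSet, Finset.mem_filter, Finset.mem_univ, true_and]
  exact fun l => hb l (Finset.mem_univ _)

noncomputable def i0 (m n : ℕ) (hn : 0 < n) (p : Fin n → ℤ) : Fin n :=
  (maxSet m n p).min' (maxSet_nonempty m n hn p)

lemma i0_max (m n : ℕ) (hn : 0 < n) (p : Fin n → ℤ) (l : Fin n) :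
    p l - (m : ℤ) * (l : ℕ) ≤ p (i0 m n hn p) - (m : ℤ) * ((i0 m n hn p : Fin n) : ℕ) := by
  have h := (maxSet m n p).min'_mem (maxSet_nonempty m n hn p)
  simp only [maxSet, Finset.mem_filter, Finset.mem_univ, true_and] at h
  exact h l

lemma i0_strict (m n : ℕ) (hn : 0 < n) (p : Fin n → ℤ) (l : Fin n)
    (hl : (l : ℕ) < ((i0 m n hn p : Fin n) : ℕ)) :
    p l - (m : ℤ) * (l : ℕ) < p (i0 m n hn p) - (m : ℤ) * ((i0 m n hn p : Fin n) : ℕ) := by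
  rcases (i0_max m n hn p l).lt_or_eq with h | h
  · exact h
  · exfalso
    have hmem : l ∈ maxSet m n p := by
      simp only [maxSet, Finset.mem_filter, Finset.mem_univ, true_and]
      intro l'
      rw [h]; exact i0_max m n hn p l'
    have h2 : i0 m n hn p ≤ l := (maxSet m n p).min'_le l hmem
    rw [Fin.le_def] at h2
    omega

lemma i0_eq (m n : ℕ) (hn : 0 < n) (p : Fin n → ℤ) (i : Fin n)
    (hmax : ∀ l : Fin n, p l - (m : ℤ) * (l : ℕ) ≤ p i - (m : ℤ) * (i : ℕ))
    (hstrict : ∀ l : Fin n, (l : ℕ) < (i : ℕ) → p l - (m : ℤ) * (l : ℕ) < p i - (m : ℤ) * (i : ℕ)) :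
    i0 m n hn p = i := by
  have hmem : i ∈ maxSet m n p := by
    simp only [maxSet, Finset.mem_filter, Finset.mem_univ, true_and]; exact hmax
  refine le_antisymm ((maxSet m n p).min'_le i hmem) ?_
  by_contra h
  push_neg at h
  have := hstrict (i0 m n hn p) (by rw [Fin.lt_def] at h; exact h)
  have h2 := i0_max m n hn p i
  exact absurd h2 (not_le.mpr this)



section Forward

variable (m n : ℕ) (hn : 0 < n) (p : Fin n → ℤ)

lemma shift_monotone (hmono : Monotone p) (hb : ∀ j : Fin n, 0 ≤ p j ∧ p j ≤ (m : ℤ) * n) (i : Fin n) : Monotone (shift m n p i) := by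
  intro a b hab
  rw [Fin.le_def] at hab
  have ha := a.isLt; have hbb := b.isLt; have hi := i.isLt
  simp only [shift]
  rcases lt_or_ge ((i : ℕ) + (a : ℕ)) n with h1 | h1 <;>
    rcases lt_or_ge ((i : ℕ) + (b : ℕ)) n with h2 | h2
  · rw [dif_pos h1, dif_pos h2]
    have := hmono (show (⟨(i:ℕ)+(a:ℕ), h1⟩ : Fin n) ≤ ⟨(i:ℕ)+(b:ℕ), h2⟩ by
      rw [Fin.mk_le_mk]; omega)
    linarith
  · rw [dif_pos h1, dif_neg (by omega)]
    have hu := (hb ⟨(i:ℕ)+(a:ℕ), h1⟩).2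
    have hl := (hb ⟨(i:ℕ)+(b:ℕ) - n, by omega⟩).1
    linarith
  · omega
  · rw [dif_neg (by omega), dif_neg (by omega)]
    have := hmono (show (⟨(i:ℕ)+(a:ℕ) - n, by omega⟩ : Fin n) ≤ ⟨(i:ℕ)+(b:ℕ) - n, by omega⟩ by
      rw [Fin.mk_le_mk]; omega)
    linarith

lemma shift_nonneg (hmono : Monotone p) (hb : ∀ j : Fin n, 0 ≤ p j ∧ p j ≤ (m : ℤ) * n) (i : Fin n) (j : Fin n) : 0 ≤ shift m n p i j := by
  have hi := i.isLt; have hj := j.isLt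
  simp only [shift]
  split
  · next h =>
    have := hmono (show i ≤ ⟨(i:ℕ)+(j:ℕ), h⟩ by simp [Fin.le_def])
    linarith
  · next h =>
    have hu := (hb i).2
    have hl := (hb ⟨(i:ℕ)+(j:ℕ) - n, by omega⟩).1
    linarith

lemma shift_dyck (j : Fin n) :
    shift m n p (i0 m n hn p) j ≤ (m : ℤ) * (j : ℕ) := by
  have hi := (i0 m n hn p).isLt; have hj := j.isLt
  simp only [shift]
  split
  · next h =>
    have hmax := i0_max m n hn p ⟨((i0 m n hn p):ℕ)+(j:ℕ), h⟩
    simp only [Fin.val_mk] at hmax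
    have hc : ((((i0 m n hn p):ℕ) + (j:ℕ) : ℕ) : ℤ)
        = (((i0 m n hn p):ℕ) : ℤ) + ((j:ℕ) : ℤ) := by push_cast; ring
    rw [hc] at hmax
    linarith
  · next h =>
    have hstrict := i0_strict m n hn p ⟨((i0 m n hn p):ℕ)+(j:ℕ) - n, by omega⟩ (by simp; omega)
    simp only [Fin.val_mk] at hstrict
    have hc : ((((i0 m n hn p):ℕ) + (j:ℕ) - n : ℕ) : ℤ)
        = (((i0 m n hn p):ℕ) : ℤ) + ((j:ℕ) : ℤ) - (n : ℤ) := by omega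
    have hmc := congrArg (fun z : ℤ => (m : ℤ) * z) hc
    linarith

lemma idx_shift (hb : ∀ j : Fin n, 0 ≤ p j ∧ p j ≤ (m : ℤ) * n) (i : Fin n) :
    idx m n (shift m n p i) (p i) = (i : ℕ) := by
  classical
  have hi := i.isLt
  have hfe : (Finset.univ.filter fun j : Fin n => (m : ℤ) * n - p i < shift m n p i j)
      = Finset.univ.filter fun j : Fin n => n - (i : ℕ) ≤ (j : ℕ) := by
    apply Finset.filter_congr
    intro j _
    have hj := j.isLt
    simp only [shift]
    split
    · next h =>
      have hu := (hb ⟨(i:ℕ)+(j:ℕ), h⟩).2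
      constructor
      · intro hc; exfalso; linarith
      · intro hc; exfalso; omega
    · next h =>
      have hl := (hb ⟨(i:ℕ)+(j:ℕ) - n, by omega⟩).1
      constructor
      · intro _; simp; omega
      · intro _; simp; linarith
  rw [idx, hfe, card_filter_le_val]
  omega

lemma unshift'_shift (i : Fin n) :
    unshift' m n (shift m n p i) (p i) (i : ℕ) (le_of_lt i.isLt) = p := by
  funext l
  have hi := i.isLt; have hl := l.isLt
  simp only [unshift', shift]
  split
  · next h =>
    rw [dif_pos (show (i:ℕ) + ((l:ℕ) - (i:ℕ)) < n by omega)]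
    have he : (⟨(i:ℕ) + ((l:ℕ) - (i:ℕ)), by omega⟩ : Fin n) = l := by
      apply Fin.ext; simp; omega
    rw [he]; ring
  · next h =>
    rw [dif_neg (show ¬ ((i:ℕ) + ((l:ℕ) + n - (i:ℕ)) < n) by omega)]
    have he : (⟨(i:ℕ) + ((l:ℕ) + n - (i:ℕ)) - n, by omega⟩ : Fin n) = l := by
      apply Fin.ext; simp; omega
    rw [he]; ring

end Forward

section Backward

variable (m n : ℕ) (hn : 0 < n) (t : Fin n → ℤ) (k : ℤ)

lemma t_zero (htd : ∀ j : Fin n, 0 ≤ t j ∧ t j ≤ (m : ℤ) * (j : ℕ)) : t ⟨0, hn⟩ = 0 := by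
  have h := htd ⟨0, hn⟩
  simp at h
  omega

include hn in
lemma idx_lt (ht : Monotone t) (htd : ∀ j : Fin n, 0 ≤ t j ∧ t j ≤ (m : ℤ) * (j : ℕ))
    (hk1 : k ≤ (m : ℤ) * n) : idx m n t k < n := by
  rcases Nat.lt_or_ge (idx m n t k) n with h | h
  · exact h
  · exfalso
    have h0 : (m : ℤ) * n - k < t ⟨0, hn⟩ := by
      rw [idx_mem_iff m n t ht k ⟨0, hn⟩]
      simp; omega
    rw [t_zero m n hn t htd] at h0
    omega

lemma t_low (ht : Monotone t) (j : Fin n) (hj : (j : ℕ) < n - idx m n t k) :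
    t j + k ≤ (m : ℤ) * n := by
  have := (idx_mem_iff m n t ht k j).not
  simp only [not_lt, not_le] at this
  have h2 := this.mpr (by omega)
  omega

lemma t_high (ht : Monotone t) (j : Fin n) (hj : n - idx m n t k ≤ (j : ℕ)) :
    (m : ℤ) * n + 1 ≤ t j + k := by
  have := (idx_mem_iff m n t ht k j).mpr hj
  omega

lemma unshift'_monotone (ht : Monotone t) (htd : ∀ j : Fin n, 0 ≤ t j ∧ t j ≤ (m : ℤ) * (j : ℕ))
    (hk0 : 0 ≤ k) :
    Monotone (unshift' m n t k (idx m n t k) (idx_le m n t k)) := by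
  intro a b hab
  rw [Fin.le_def] at hab
  have ha := a.isLt; have hbb := b.isLt; have hi := idx_le m n t k
  simp only [unshift']
  rcases Nat.lt_or_ge (a : ℕ) (idx m n t k) with h1 | h1 <;>
    rcases Nat.lt_or_ge (b : ℕ) (idx m n t k) with h2 | h2
  · rw [dif_neg (by omega), dif_neg (by omega)]
    have := ht (show (⟨(a:ℕ) + n - idx m n t k, by omega⟩ : Fin n)
        ≤ ⟨(b:ℕ) + n - idx m n t k, by omega⟩ by rw [Fin.mk_le_mk]; omega)
    linarith
  · rw [dif_neg (by omega), dif_pos h2]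
    have hu := (htd ⟨(a:ℕ) + n - idx m n t k, by omega⟩).2
    have hl := (htd ⟨(b:ℕ) - idx m n t k, by omega⟩).1
    have hcast : (((a:ℕ) + n - idx m n t k : ℕ) : ℤ) ≤ (n : ℤ) := by omega
    have := mul_le_mul_of_nonneg_left hcast (by positivity : (0:ℤ) ≤ (m:ℤ))
    linarith
  · omega
  · rw [dif_pos h1, dif_pos h2]
    have := ht (show (⟨(a:ℕ) - idx m n t k, by omega⟩ : Fin n)
        ≤ ⟨(b:ℕ) - idx m n t k, by omega⟩ by rw [Fin.mk_le_mk]; omega)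
    linarith

lemma unshift'_bounds (ht : Monotone t) (htd : ∀ j : Fin n, 0 ≤ t j ∧ t j ≤ (m : ℤ) * (j : ℕ))
    (hk0 : 0 ≤ k) (hk1 : k ≤ (m : ℤ) * n) (l : Fin n) :
    0 ≤ unshift' m n t k (idx m n t k) (idx_le m n t k) l ∧
      unshift' m n t k (idx m n t k) (idx_le m n t k) l ≤ (m : ℤ) * n := by
  have hl := l.isLt; have hi := idx_le m n t k
  simp only [unshift']
  split
  · next h =>
    have hlow := (htd ⟨(l:ℕ) - idx m n t k, by omega⟩).1
    have hup := t_low m n t k ht ⟨(l:ℕ) - idx m n t k, by omega⟩ (by simp; omega)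
    constructor
    · linarith
    · linarith
  · next h =>
    have hhigh := t_high m n t k ht ⟨(l:ℕ) + n - idx m n t k, by omega⟩ (by simp; omega)
    have hup := (htd ⟨(l:ℕ) + n - idx m n t k, by omega⟩).2
    have hcast : (((l:ℕ) + n - idx m n t k : ℕ) : ℤ) ≤ (n : ℤ) := by omega
    have := mul_le_mul_of_nonneg_left hcast (by positivity : (0:ℤ) ≤ (m:ℤ))
    constructor
    · linarith
    · linarith

lemma unshift'_at_idx (htd : ∀ j : Fin n, 0 ≤ t j ∧ t j ≤ (m : ℤ) * (j : ℕ))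
    (ht : Monotone t) (hk1 : k ≤ (m : ℤ) * n) :
    unshift' m n t k (idx m n t k) (idx_le m n t k)
      ⟨idx m n t k, idx_lt m n hn t k ht htd hk1⟩ = k := by
  simp only [unshift']
  rw [dif_pos (by simp)]
  have he : (⟨(((⟨idx m n t k, idx_lt m n hn t k ht htd hk1⟩ : Fin n) : ℕ)) - idx m n t k,
      by omega⟩ : Fin n) = ⟨0, hn⟩ := by apply Fin.ext; simp
  rw [he, t_zero m n hn t htd]
  ring

lemma shift_unshift' (htd : ∀ j : Fin n, 0 ≤ t j ∧ t j ≤ (m : ℤ) * (j : ℕ))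
    (ht : Monotone t) (hk1 : k ≤ (m : ℤ) * n) :
    shift m n (unshift' m n t k (idx m n t k) (idx_le m n t k))
      ⟨idx m n t k, idx_lt m n hn t k ht htd hk1⟩ = t := by
  funext j
  have hj := j.isLt
  have hilt := idx_lt m n hn t k ht htd hk1
  simp only [shift, unshift', Fin.val_mk]
  split
  · next h =>
    rw [dif_pos (show idx m n t k ≤ idx m n t k + (j:ℕ) by omega),
      dif_pos (show idx m n t k ≤ idx m n t k by omega)]
    have he1 : (⟨idx m n t k + (j:ℕ) - idx m n t k, by omega⟩ : Fin n) = j := by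
      apply Fin.ext; simp
    have he2 : (⟨idx m n t k - idx m n t k, by omega⟩ : Fin n) = ⟨0, hn⟩ := by
      apply Fin.ext; simp
    rw [he1, he2, t_zero m n hn t htd]
    ring
  · next h =>
    rw [dif_neg (show ¬ (idx m n t k ≤ idx m n t k + (j:ℕ) - n) by omega),
      dif_pos (show idx m n t k ≤ idx m n t k by omega)]
    have he1 : (⟨idx m n t k + (j:ℕ) - n + n - idx m n t k, by omega⟩ : Fin n) = j := by
      apply Fin.ext; simp; omega
    have he2 : (⟨idx m n t k - idx m n t k, by omega⟩ : Fin n) = ⟨0, hn⟩ := by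
      apply Fin.ext; simp
    rw [he1, he2, t_zero m n hn t htd]
    ring

end Backward

section Back2

variable (m n : ℕ) (hn : 0 < n) (t : Fin n → ℤ) (k : ℤ)

include hn in
lemma unshift'_est (ht : Monotone t) (htd : ∀ j : Fin n, 0 ≤ t j ∧ t j ≤ (m : ℤ) * (j : ℕ))
    (l : Fin n) :
    (idx m n t k ≤ (l : ℕ) →
      unshift' m n t k (idx m n t k) (idx_le m n t k) l - (m : ℤ) * (l : ℕ)
        ≤ k - (m : ℤ) * (idx m n t k)) ∧
    ((l : ℕ) < idx m n t k →
      unshift' m n t k (idx m n t k) (idx_le m n t k) l - (m : ℤ) * (l : ℕ)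
        ≤ k - (m : ℤ) * (idx m n t k) - 1) := by
  have hl := l.isLt; have hi := idx_le m n t k
  constructor
  · intro h
    simp only [unshift']
    rw [dif_pos h]
    have hd := (htd ⟨(l:ℕ) - idx m n t k, by omega⟩).2
    simp only [Fin.val_mk] at hd
    have hc : (((l:ℕ) - idx m n t k : ℕ) : ℤ) = ((l:ℕ) : ℤ) - (idx m n t k : ℤ) := by omega
    have hmc := congrArg (fun z : ℤ => (m : ℤ) * z) hc
    linarith
  · intro h
    simp only [unshift']
    rw [dif_neg (by omega)]
    have hd := (htd ⟨(l:ℕ) + n - idx m n t k, by omega⟩).2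
    simp only [Fin.val_mk] at hd
    have hc : (((l:ℕ) + n - idx m n t k : ℕ) : ℤ)
        = ((l:ℕ) : ℤ) + (n : ℤ) - (idx m n t k : ℤ) := by omega
    have hmc := congrArg (fun z : ℤ => (m : ℤ) * z) hc
    linarith

lemma i0_unshift (ht : Monotone t) (htd : ∀ j : Fin n, 0 ≤ t j ∧ t j ≤ (m : ℤ) * (j : ℕ))
    (hk1 : k ≤ (m : ℤ) * n) :
    i0 m n hn (unshift' m n t k (idx m n t k) (idx_le m n t k))
      = ⟨idx m n t k, idx_lt m n hn t k ht htd hk1⟩ := by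
  have hilt := idx_lt m n hn t k ht htd hk1
  have hqi := unshift'_at_idx m n hn t k htd ht hk1
  apply i0_eq
  · intro l
    rw [hqi]
    simp only [Fin.val_mk]
    rcases Nat.lt_or_ge (l : ℕ) (idx m n t k) with h | h
    · have := (unshift'_est m n hn t k ht htd l).2 h
      linarith
    · exact (unshift'_est m n hn t k ht htd l).1 h
  · intro l hl
    rw [hqi]
    simp only [Fin.val_mk] at hl ⊢
    have := (unshift'_est m n hn t k ht htd l).2 hl
    linarith

end Back2
end CycleLemmaAux

open CycleLemmaAux in
/-- The map `h` sending a lattice path `P` from `(0,0)` to `(mn, n)` (encoded by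
its 0-indexed step sequence) to the pair `(d_{i₀}(P), s_{i₀+1})`, where `i₀` is
the unique index making the cyclic shift `d_{i₀}(P)` an m-Dyck path, is a
bijection onto (m-Dyck paths of height n) × {0, …, mn}. -/
theorem lattice_paths_equiv_dyck_times_fin (m n : ℕ) (hm : 0 < m) (hn : 0 < n) :
    ∃ h : {s : Fin n → ℤ // Monotone s ∧ ∀ j : Fin n, 0 ≤ s j ∧ s j ≤ (m : ℤ) * n} ≃
          {t : Fin n → ℤ // Monotone t ∧ ∀ j : Fin n, 0 ≤ t j ∧ t j ≤ (m : ℤ) * (j : ℕ)} ×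
          Fin (m * n + 1),
      ∀ p, ∃ i : Fin n,
        ((h p).1.1 = fun j : Fin n =>
          if hij : (i : ℕ) + (j : ℕ) < n then p.1 ⟨(i : ℕ) + (j : ℕ), hij⟩ - p.1 i
          else p.1 ⟨(i : ℕ) + (j : ℕ) - n,
              by have h1 := i.isLt; have h2 := j.isLt; omega⟩ + (m : ℤ) * n + 1 - p.1 i) ∧
        ((((h p).2 : ℕ)) : ℤ) = p.1 i := by
  classical
  refine ⟨⟨fun p => (⟨shift m n p.1 (i0 m n hn p.1),
      ⟨shift_monotone m n p.1 p.2.1 p.2.2 _,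
        fun j => ⟨shift_nonneg m n p.1 p.2.1 p.2.2 _ j, shift_dyck m n hn p.1 j⟩⟩⟩,
      ⟨(p.1 (i0 m n hn p.1)).toNat, by
        have h1 := (p.2.2 (i0 m n hn p.1)).2
        have h2 : (p.1 (i0 m n hn p.1)).toNat ≤ m * n :=
          Int.toNat_le.mpr (by push_cast; exact h1)
        omega⟩),
    fun q => ⟨unshift' m n q.1.1 ((q.2 : ℕ) : ℤ) (idx m n q.1.1 ((q.2 : ℕ) : ℤ))
        (idx_le m n q.1.1 _),
      ⟨unshift'_monotone m n q.1.1 _ q.1.2.1 q.1.2.2 (by positivity),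
        fun l => unshift'_bounds m n q.1.1 _ q.1.2.1 q.1.2.2 (by positivity)
          (by exact_mod_cast Nat.lt_succ_iff.mp q.2.isLt) l⟩⟩,
    ?_, ?_⟩, ?_⟩
  · -- left inverse
    intro p
    apply Subtype.ext
    dsimp only
    have hk : (((p.1 (i0 m n hn p.1)).toNat : ℕ) : ℤ) = p.1 (i0 m n hn p.1) :=
      Int.toNat_of_nonneg (p.2.2 _).1
    rw [hk]
    rw [unshift'_congr m n _ _ _ (le_of_lt (Fin.isLt _))
      (idx_shift m n p.1 p.2.2 (i0 m n hn p.1))]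
    exact unshift'_shift m n p.1 (i0 m n hn p.1)
  · -- right inverse
    intro q
    obtain ⟨⟨t, ht, htd⟩, kf⟩ := q
    dsimp only
    have hk0 : (0 : ℤ) ≤ ((kf : ℕ) : ℤ) := by positivity
    have hk1 : ((kf : ℕ) : ℤ) ≤ (m : ℤ) * n := by
      exact_mod_cast Nat.lt_succ_iff.mp kf.isLt
    have hi0 := i0_unshift m n hn t ((kf : ℕ) : ℤ) ht htd hk1
    refine Prod.ext ?_ ?_
    · apply Subtype.ext
      dsimp only
      rw [hi0]
      exact shift_unshift' m n hn t ((kf : ℕ) : ℤ) htd ht hk1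
    · apply Fin.ext
      dsimp only
      rw [hi0, unshift'_at_idx m n hn t ((kf : ℕ) : ℤ) htd ht hk1]
      simp
  · -- the property
    intro p
    refine ⟨i0 m n hn p.1, ?_, ?_⟩
    · rfl
    · exact Int.toNat_of_nonneg (p.2.2 _).1
end

section
/- The number of m-Dyck paths of height n, i.e., sequences (s_1,...,s_n) of integers with 0 ≤ s_1 ≤ s_2 ≤ ... ≤ s_n and s_i ≤ m(i-1) for all i, equals (1/(mn+1)) * binomial((m+1)n, n). -/
namespace MDyckAux

variable (m n : ℕ)

/-- Total number of steps in the cyclic word: `n` down-steps of size `m`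
and `m*n+1` up-steps of size 1. -/
def L : ℕ := (m + 1) * n + 1

lemma L_pos : 0 < L m n := Nat.succ_pos _

variable {m n}

/-- Cyclic rotation of `Fin (L m n)` by `d`. -/
def rotf (d : ℕ) (a : Fin (L m n)) : Fin (L m n) :=
  ⟨(a.val + d) % L m n, Nat.mod_lt _ (L_pos m n)⟩

lemma rotf_rotf (d e : ℕ) (a : Fin (L m n)) : rotf d (rotf e a) = rotf (e + d) a := by
  simp only [rotf, Fin.mk.injEq]
  rw [Nat.mod_add_mod, Nat.add_assoc]

lemma rotf_L (a : Fin (L m n)) : rotf (L m n) a = a := by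
  apply Fin.ext
  simp only [rotf, Nat.add_mod_right]
  exact Nat.mod_eq_of_lt a.isLt

lemma mem_image_rotf (A : Finset (Fin (L m n))) {d e : ℕ} (h : d + e = L m n)
    (x : Fin (L m n)) : x ∈ A.image (rotf d) ↔ rotf e x ∈ A := by
  constructor
  · rintro hx
    obtain ⟨a, ha, rfl⟩ := Finset.mem_image.mp hx
    rwa [rotf_rotf, h, rotf_L]
  · intro hx
    exact Finset.mem_image.mpr ⟨rotf e x, hx, by rw [rotf_rotf, Nat.add_comm e d, h, rotf_L]⟩

/-- indicator of the periodic extension of `A`. -/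
def per (A : Finset (Fin (L m n))) (i : ℕ) : ℕ :=
  if (⟨i % L m n, Nat.mod_lt _ (L_pos m n)⟩ : Fin (L m n)) ∈ A then 1 else 0

lemma per_add_L (A : Finset (Fin (L m n))) (i : ℕ) : per A (i + L m n) = per A i := by
  simp [per, Nat.add_mod_right]

/-- number of down-steps among the first `k` steps. -/
def N (A : Finset (Fin (L m n))) (k : ℕ) : ℕ := ∑ i ∈ Finset.range k, per A i

lemma N_succ (A : Finset (Fin (L m n))) (k : ℕ) : N A (k + 1) = N A k + per A k :=
  Finset.sum_range_succ _ _

lemma N_L (A : Finset (Fin (L m n))) : N A (L m n) = A.card := by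
  rw [N, ← Fin.sum_univ_eq_sum_range (fun i => per A i) (L m n)]
  have h1 : ∀ i : Fin (L m n), per A i.val = if i ∈ A then 1 else 0 := by
    intro i
    have : (⟨i.val % L m n, Nat.mod_lt _ (L_pos m n)⟩ : Fin (L m n)) = i :=
      Fin.ext (Nat.mod_eq_of_lt i.isLt)
    rw [per, this]
  rw [Finset.sum_congr rfl (fun i _ => h1 i)]
  rw [Finset.sum_ite_mem, Finset.univ_inter, Finset.card_eq_sum_ones]

lemma N_add_L (A : Finset (Fin (L m n))) (hA : A.card = n) (k : ℕ) :
    N A (k + L m n) = N A k + n := by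
  induction k with
  | zero => simpa [N] using (N_L A).trans hA
  | succ k ih =>
      have : k + 1 + L m n = (k + L m n) + 1 := by ring
      rw [this, N_succ, ih, per_add_L, N_succ]
      ring

/-- integer height of the path after `k` steps (ups count `+1`, downs `-(m)`,
i.e. `k - (m+1)·downs`). -/
def S (A : Finset (Fin (L m n))) (k : ℕ) : ℤ := (k : ℤ) - (m + 1) * N A k

lemma S_add_L (A : Finset (Fin (L m n))) (hA : A.card = n) (k : ℕ) :
    S A (k + L m n) = S A k + 1 := by
  rw [S, S, N_add_L A hA, L]
  push_cast
  ring

/-- `t` is a good starting point: all proper partial sums of one full cycle are positive. -/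
def GoodT (A : Finset (Fin (L m n))) (t : ℕ) : Prop :=
  ∀ k, 0 < k → k ≤ L m n → S A t < S A (t + k)

/-- Number of elements of `A` below `k`. -/
def cnt (A : Finset (Fin (L m n))) (k : ℕ) : ℕ := (A.filter (fun a => a.val < k)).card

/-- `A` encodes a good word read from position 0. -/
def Good (A : Finset (Fin (L m n))) : Prop :=
  ∀ k, 0 < k → k ≤ L m n → (m + 1) * cnt A k < k


lemma N_mono (A : Finset (Fin (L m n))) : Monotone (N A) := by
  intro a b hab
  exact Finset.sum_le_sum_of_subset (Finset.range_subset_range.mpr hab)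

lemma cnt_eq_sum (A : Finset (Fin (L m n))) (k : ℕ) (hk : k ≤ L m n) :
    cnt A k = ∑ j ∈ Finset.range k, per A j := by
  rw [cnt]
  have hsum : ∑ j ∈ Finset.range k, per A j =
      ((Finset.range k).filter
        (fun j => (⟨j % L m n, Nat.mod_lt _ (L_pos m n)⟩ : Fin (L m n)) ∈ A)).card := by
    rw [Finset.card_filter]
    exact Finset.sum_congr rfl fun j _ => rfl
  rw [hsum]
  apply Finset.card_bij' (fun (a : Fin (L m n)) _ => a.val)
      (fun (j : ℕ) hj => (⟨j % L m n, Nat.mod_lt _ (L_pos m n)⟩ : Fin (L m n)))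
  · intro a ha
    rw [Finset.mem_filter] at ha ⊢
    refine ⟨Finset.mem_range.mpr ha.2, ?_⟩
    have : a.val % L m n = a.val := Nat.mod_eq_of_lt a.isLt
    simpa [this] using ha.1
  · intro j hj
    rw [Finset.mem_filter] at hj ⊢
    exact ⟨hj.2, by
      simp only
      have : j % L m n = j := Nat.mod_eq_of_lt (lt_of_lt_of_le (Finset.mem_range.mp hj.1) hk)
      simpa [this] using Finset.mem_range.mp hj.1⟩
  · intro a ha
    exact Fin.ext (Nat.mod_eq_of_lt a.isLt)
  · intro j hj
    have hj' := (Finset.mem_filter.mp hj).1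
    exact Nat.mod_eq_of_lt (lt_of_lt_of_le (Finset.mem_range.mp hj') hk)

lemma per_image (A : Finset (Fin (L m n))) {d t : ℕ} (h : d + t = L m n) (j : ℕ) :
    per (A.image (rotf d)) j = per A (j + t) := by
  rw [per, per]
  have : ((⟨j % L m n, Nat.mod_lt _ (L_pos m n)⟩ : Fin (L m n)) ∈ A.image (rotf d)) ↔
      ((⟨(j + t) % L m n, Nat.mod_lt _ (L_pos m n)⟩ : Fin (L m n)) ∈ A) := by
    rw [mem_image_rotf A h]
    have : rotf t (⟨j % L m n, Nat.mod_lt _ (L_pos m n)⟩ : Fin (L m n)) =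
        ⟨(j + t) % L m n, Nat.mod_lt _ (L_pos m n)⟩ := by
      apply Fin.ext
      simp only [rotf]
      rw [Nat.mod_add_mod]
    rw [this]
  split_ifs with h1 h2 h2
  · rfl
  · exact absurd (this.mp h1) h2
  · exact absurd (this.mpr h2) h1
  · rfl

lemma N_shift (A : Finset (Fin (L m n))) (t k : ℕ) :
    N A (t + k) = N A t + ∑ j ∈ Finset.range k, per A (j + t) := by
  induction k with
  | zero => simp
  | succ k ih =>
      rw [show t + (k + 1) = (t + k) + 1 by ring, N_succ, ih, Finset.sum_range_succ,
        Nat.add_comm k t]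
      ring

lemma good_image_iff (A : Finset (Fin (L m n))) {t : ℕ} (ht : t ≤ L m n) :
    Good (A.image (rotf (L m n - t))) ↔ GoodT A t := by
  have hd : (L m n - t) + t = L m n := Nat.sub_add_cancel ht
  rw [Good, GoodT]
  refine forall_congr' fun k => imp_congr_right fun hk => imp_congr_right fun hkL => ?_
  rw [cnt_eq_sum _ _ hkL, Finset.sum_congr rfl (fun j _ => per_image A hd j)]
  rw [S, S, N_shift]
  have hcast : ((t + k : ℕ) : ℤ) - (m + 1) * ((N A t + ∑ j ∈ Finset.range k, per A (j + t) : ℕ) : ℤ)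
      = ((t : ℕ) : ℤ) - (m + 1) * (N A t : ℤ) + ((k : ℤ) -
        (m + 1) * ((∑ j ∈ Finset.range k, per A (j + t) : ℕ) : ℤ)) := by
    push_cast
    ring
  rw [hcast]
  have hc : (m + 1) * (∑ j ∈ Finset.range k, per A (j + t)) < k ↔
      (((m + 1) * (∑ j ∈ Finset.range k, per A (j + t)) : ℕ) : ℤ) < (k : ℤ) := by
    exact_mod_cast Iff.rfl
  rw [hc]
  push_cast
  constructor <;> intro h <;> linarith


lemma goodT_unique_aux (A : Finset (Fin (L m n))) (hA : A.card = n) {t1 t2 : ℕ}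
    (h1 : t1 < L m n ∧ GoodT A t1) (h2 : t2 < L m n ∧ GoodT A t2) (hlt : t1 < t2) : False := by
  obtain ⟨hb1, g1⟩ := h1
  obtain ⟨hb2, g2⟩ := h2
  have e1 : S A t1 < S A t2 := by
    have := g1 (t2 - t1) (by omega) (by omega)
    rwa [show t1 + (t2 - t1) = t2 by omega] at this
  have e2 : S A t2 < S A (t1 + L m n) := by
    have := g2 (t1 + L m n - t2) (by omega) (by omega)
    rwa [show t2 + (t1 + L m n - t2) = t1 + L m n by omega] at this
  rw [S_add_L A hA] at e2
  omega

lemma goodT_exists (A : Finset (Fin (L m n))) (hA : A.card = n) :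
    ∃ t, t < L m n ∧ GoodT A t := by
  have hne : (Finset.range (L m n)).Nonempty := ⟨0, Finset.mem_range.mpr (L_pos m n)⟩
  obtain ⟨t0, ht0, hmin⟩ := Finset.exists_min_image (Finset.range (L m n)) (S A) hne
  -- take the largest minimizer
  set M : Finset ℕ := (Finset.range (L m n)).filter (fun u => ∀ v ∈ Finset.range (L m n),
    S A u ≤ S A v) with hM
  have hMne : M.Nonempty := ⟨t0, Finset.mem_filter.mpr ⟨ht0, hmin⟩⟩
  set t : ℕ := M.max' hMne with htdef
  have htM : t ∈ M := M.max'_mem hMne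
  have htL : t < L m n := Finset.mem_range.mp (Finset.mem_filter.mp htM).1
  have htmin : ∀ v ∈ Finset.range (L m n), S A t ≤ S A v := (Finset.mem_filter.mp htM).2
  refine ⟨t, htL, ?_⟩
  intro k hk hkL
  by_cases hc : t + k < L m n
  · have hge : S A t ≤ S A (t + k) := htmin _ (Finset.mem_range.mpr hc)
    rcases lt_or_eq_of_le hge with h | h
    · exact h
    · exfalso
      have hmem : t + k ∈ M := Finset.mem_filter.mpr ⟨Finset.mem_range.mpr hc,
        fun v hv => h ▸ htmin v hv⟩
      have := M.le_max' _ hmem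
      omega
  · have hk' : t + k - L m n < L m n := by omega
    have : S A (t + k) = S A (t + k - L m n) + 1 := by
      rw [← S_add_L A hA, show t + k - L m n + L m n = t + k by omega]
    rw [this]
    have := htmin _ (Finset.mem_range.mpr hk')
    omega

lemma existsUnique_goodT (A : Finset (Fin (L m n))) (hA : A.card = n) :
    ∃! t, t < L m n ∧ GoodT A t := by
  obtain ⟨t, ht⟩ := goodT_exists A hA
  refine ⟨t, ht, fun t' ht' => ?_⟩
  rcases lt_trichotomy t' t with h | h | h
  · exact absurd (goodT_unique_aux A hA ht' ht h) (fun x => x)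
  · exact h
  · exact absurd (goodT_unique_aux A hA ht ht' h) (fun x => x)


lemma rotf_injective (d : ℕ) : Function.Injective (rotf d : Fin (L m n) → Fin (L m n)) := by
  intro a b h
  have hval : (a.val + d) % L m n = (b.val + d) % L m n := congrArg Fin.val h
  have hmod : a.val % L m n = b.val % L m n := Nat.ModEq.add_right_cancel' d hval
  rw [Nat.mod_eq_of_lt a.isLt, Nat.mod_eq_of_lt b.isLt] at hmod
  exact Fin.ext hmod

lemma image_rotf_rotf (B : Finset (Fin (L m n))) (t d : ℕ) :
    (B.image (rotf t)).image (rotf d) = B.image (rotf (t + d)) := by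
  rw [Finset.image_image]
  exact Finset.image_congr (fun a _ => rotf_rotf d t a)

lemma image_rotf_L (B : Finset (Fin (L m n))) : B.image (rotf (L m n)) = B := by
  rw [show (rotf (L m n) : Fin (L m n) → Fin (L m n)) = id from funext rotf_L, Finset.image_id]

lemma card_image_rotf (B : Finset (Fin (L m n))) (d : ℕ) : (B.image (rotf d)).card = B.card :=
  Finset.card_image_of_injective _ (rotf_injective d)

/-- The unrotation map is a bijection between (rotation, good set) pairs and all `n`-subsets. -/
lemma bij_rot :
    Function.Bijective (fun p : Fin (L m n) × {B : Finset (Fin (L m n)) // B.card = n ∧ Good B} =>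
      (⟨(p.2 : Finset (Fin (L m n))).image (rotf p.1.val), by
        rw [card_image_rotf]; exact p.2.2.1⟩ : {A : Finset (Fin (L m n)) // A.card = n})) := by
  have key : ∀ (t : Fin (L m n)) (B : Finset (Fin (L m n))), B.card = n → Good B →
      GoodT (B.image (rotf t.val)) t.val := by
    intro t B hB hG
    have ht : t.val ≤ L m n := le_of_lt t.isLt
    rw [← good_image_iff _ ht]
    rw [image_rotf_rotf, show t.val + (L m n - t.val) = L m n by omega, image_rotf_L]
    exact hG
  constructor
  · rintro ⟨t1, B1, hB1, hG1⟩ ⟨t2, B2, hB2, hG2⟩ h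
    simp only [Subtype.mk.injEq] at h
    have hA1 : (B1.image (rotf t1.val)).card = n := by rw [card_image_rotf]; exact hB1
    have hu := existsUnique_goodT (B1.image (rotf t1.val)) hA1
    have h1 : t1.val < L m n ∧ GoodT (B1.image (rotf t1.val)) t1.val :=
      ⟨t1.isLt, key t1 B1 hB1 hG1⟩
    have h2 : t2.val < L m n ∧ GoodT (B1.image (rotf t1.val)) t2.val := by
      rw [h]
      exact ⟨t2.isLt, key t2 B2 hB2 hG2⟩
    obtain ⟨t, _, huniq⟩ := hu
    have e1 : t1.val = t := huniq _ h1
    have e2 : t2.val = t := huniq _ h2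
    have et : t1 = t2 := Fin.ext (e1.trans e2.symm)
    subst et
    have hB : B1 = B2 := by
      have := Finset.image_injective (rotf_injective (m := m) (n := n) t1.val) h
      exact this
    simp [hB]
  · rintro ⟨A, hA⟩
    obtain ⟨t, ⟨htL, htG⟩, _⟩ := existsUnique_goodT A hA
    have hgood : Good (A.image (rotf (L m n - t))) := (good_image_iff A (le_of_lt htL)).mpr htG
    refine ⟨⟨⟨t, htL⟩, ⟨A.image (rotf (L m n - t)), by rw [card_image_rotf]; exact hA, hgood⟩⟩, ?_⟩
    simp only [Subtype.mk.injEq]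
    rw [image_rotf_rotf, show L m n - t + t = L m n by omega, image_rotf_L]

lemma card_choose_eq (m n : ℕ) :
    Nat.choose (L m n) n =
      L m n * Nat.card {B : Finset (Fin (L m n)) // B.card = n ∧ Good B} := by
  have h1 : Nat.card {A : Finset (Fin (L m n)) // A.card = n} = Nat.choose (L m n) n := by
    rw [Nat.card_eq_fintype_card, Fintype.card_finset_len, Fintype.card_fin]
  have h2 := Nat.card_eq_of_bijective _ (bij_rot (m := m) (n := n))
  rw [Nat.card_prod, Nat.card_eq_fintype_card (α := Fin (L m n)), Fintype.card_fin] at h2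
  rw [← h1, ← h2]


/-- A strictly monotone function to `ℕ` grows at least linearly. -/
lemma strictMono_add_le {f : Fin n → ℕ} (hf : StrictMono f) :
    ∀ (d : ℕ) (i j : Fin n), j.val = i.val + d → f i + d ≤ f j := by
  intro d
  induction d with
  | zero =>
      intro i j h
      have : j = i := Fin.ext (by omega)
      subst this
      simp
  | succ d ih =>
      intro i j h
      have hlt : i.val + d < n := by omega
      have hj' := ih i ⟨i.val + d, hlt⟩ rfl
      have hstep : f ⟨i.val + d, hlt⟩ < f j := hf (by simp [Fin.lt_def, h])
      omega

section GoodToDyck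

variable {B : Finset (Fin (L m n))}

lemma pval_strictMono (hB : B.card = n) :
    StrictMono (fun i : Fin n => ((B.orderEmbOfFin hB) i).val) :=
  fun a b hab => (B.orderEmbOfFin hB).strictMono hab

lemma pval_lower (hB : B.card = n) (hG : Good B) (i : Fin n) :
    (m + 1) * (i.val + 1) ≤ ((B.orderEmbOfFin hB) i).val := by
  set p := B.orderEmbOfFin hB with hp
  have hklt : (p i).val < L m n := (p i).isLt
  have hgood := hG ((p i).val + 1) (Nat.succ_pos _) hklt
  have hcnt : i.val + 1 ≤ cnt B ((p i).val + 1) := by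
    rw [cnt, ← Fin.card_Iic i]
    apply Finset.card_le_card_of_injOn p
    · intro a ha
      rw [Finset.mem_coe, Finset.mem_filter]
      refine ⟨Finset.orderEmbOfFin_mem B hB a, ?_⟩
      have : p a ≤ p i := (p.monotone) (Finset.mem_Iic.mp ha)
      omega
    · exact fun a _ b _ h => p.injective h
  have := lt_of_le_of_lt (Nat.mul_le_mul_left (m + 1) hcnt) hgood
  omega

lemma pval_upper (hB : B.card = n) (hn : 0 < n) (i : Fin n) :
    ((B.orderEmbOfFin hB) i).val ≤ m * n + 1 + i.val := by
  obtain ⟨jl, hjl⟩ : ∃ jl : Fin n, jl.val = n - 1 := ⟨⟨n - 1, by omega⟩, rfl⟩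
  have h1 := strictMono_add_le (pval_strictMono hB) (n - 1 - i.val) i jl (by omega)
  have h2 := ((B.orderEmbOfFin hB) jl).isLt
  have hL : L m n = m * n + n + 1 := by rw [L]; ring
  have h3 := i.isLt
  omega

/-- `u i`: number of up-steps before the `i`-th down-step. -/
lemma u_mono (hB : B.card = n) (hG : Good B) {i j : Fin n} (hij : i ≤ j) :
    ((B.orderEmbOfFin hB) i).val - i.val ≤ ((B.orderEmbOfFin hB) j).val - j.val := by
  have h1 := strictMono_add_le (pval_strictMono hB) (j.val - i.val) i j (by
    have := Fin.le_def.mp hij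
    omega)
  have h2 := pval_lower hB hG i
  have := Fin.le_def.mp hij
  omega

end GoodToDyck

section DyckToGood

variable (m)

/-- positions of the down-steps built from a step sequence `s`. -/
def pf (s : Fin n → ℕ) (hle : ∀ j : Fin n, s j ≤ m * (j : ℕ)) (i : Fin n) : Fin (L m n) :=
  ⟨(m * n + 1 - s i.rev) + i.val, by
    have h1 : s i.rev ≤ m * n + 1 := by
      have := hle i.rev
      have h2 : m * i.rev.val ≤ m * n := Nat.mul_le_mul_left m (le_of_lt i.rev.isLt)
      omega
    have hL : L m n = m * n + n + 1 := by rw [L]; ring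
    have := i.isLt
    omega⟩

lemma pf_strictMono (s : Fin n → ℕ) (hmono : Monotone s)
    (hle : ∀ j : Fin n, s j ≤ m * (j : ℕ)) : StrictMono (pf m s hle) := by
  intro i j hij
  have hrev : j.rev ≤ i.rev := by
    rw [Fin.rev_le_rev]
    exact le_of_lt hij
  have hs : s j.rev ≤ s i.rev := hmono hrev
  have hval : i.val < j.val := Fin.lt_def.mp hij
  rw [Fin.lt_def]
  simp only [pf]
  omega

lemma pf_good (s : Fin n → ℕ) (hmono : Monotone s)
    (hle : ∀ j : Fin n, s j ≤ m * (j : ℕ)) :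
    Good ((Finset.univ : Finset (Fin n)).image (pf m s hle)) := by
  intro k hk hkL
  set T : Finset (Fin n) := Finset.univ.filter (fun i => ((pf m s hle) i).val < k) with hT
  have himg : ((Finset.univ : Finset (Fin n)).image (pf m s hle)).filter
      (fun a => a.val < k) = T.image (pf m s hle) := Finset.filter_image
  rw [cnt, himg, Finset.card_image_of_injective _ (pf_strictMono m s hmono hle).injective]
  rcases T.eq_empty_or_nonempty with hTe | hTne
  · rw [hTe]
    simpa using hk
  · set j := T.max' hTne with hj
    have hjT : j ∈ T := T.max'_mem hTne
    have hjk : ((pf m s hle) j).val < k := (Finset.mem_filter.mp hjT).2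
    have hsub : T ⊆ Finset.Iic j := fun a ha => Finset.mem_Iic.mpr (T.le_max' a ha)
    have hcard : T.card ≤ j.val + 1 := by
      have := Finset.card_le_card hsub
      rwa [Fin.card_Iic] at this
    -- lower bound on u j
    have hu : m * (j.val + 1) + 1 ≤ m * n + 1 - s j.rev := by
      have hsj : s j.rev ≤ m * j.rev.val := hle j.rev
      have hrevval : j.rev.val = n - 1 - j.val := by
        rw [Fin.val_rev]
        omega
      have hsplit : m * (n - 1 - j.val) + m * (j.val + 1) = m * n := by
        rw [← Nat.mul_add]
        congr 1
        have := j.isLt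
        omega
      rw [hrevval] at hsj
      -- atoms
      generalize hA : m * (n - 1 - j.val) = a at hsj hsplit
      generalize hBB : m * (j.val + 1) = b at hsplit ⊢
      omega
    have hpf : ((pf m s hle) j).val = (m * n + 1 - s j.rev) + j.val := rfl
    have hexp : (m + 1) * T.card ≤ (m + 1) * (j.val + 1) := Nat.mul_le_mul_left _ hcard
    have hexp2 : (m + 1) * (j.val + 1) = m * (j.val + 1) + (j.val + 1) := by ring
    omega

end DyckToGood

section FinalEquiv

variable (m n : ℕ)

/-- From a good set to a Dyck step sequence. -/
def Fwd (x : {B : Finset (Fin (L m n)) // B.card = n ∧ Good B}) :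
    {s : Fin n → ℕ // Monotone s ∧ ∀ j : Fin n, s j ≤ m * (j : ℕ)} := by
  refine ⟨fun j => m * n + 1 - (((x.1.orderEmbOfFin x.2.1) j.rev).val - j.rev.val), ?_, ?_⟩
  · intro j j' hjj'
    have hrev : j'.rev ≤ j.rev := Fin.rev_le_rev.mpr hjj'
    have := u_mono x.2.1 x.2.2 hrev
    dsimp only
    omega
  · intro j
    dsimp only
    have hlow := pval_lower x.2.1 x.2.2 j.rev
    have hexp : (m + 1) * (j.rev.val + 1) = m * (j.rev.val + 1) + (j.rev.val + 1) := by ring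
    have hj := j.isLt
    have hrevval : j.rev.val = n - 1 - j.val := by rw [Fin.val_rev]; omega
    have hsplit : m * (j.rev.val + 1) + m * j.val = m * n := by
      rw [← Nat.mul_add]
      congr 1
      omega
    generalize hX : m * (j.rev.val + 1) = X at hexp hsplit
    generalize hY : m * j.val = Y at hsplit ⊢
    generalize hZ : m * n = Z at hsplit ⊢
    omega

/-- From a Dyck step sequence to a good set. -/
def Bwd (y : {s : Fin n → ℕ // Monotone s ∧ ∀ j : Fin n, s j ≤ m * (j : ℕ)}) :
    {B : Finset (Fin (L m n)) // B.card = n ∧ Good B} := by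
  refine ⟨(Finset.univ : Finset (Fin n)).image (pf m y.1 y.2.2), ?_, pf_good m y.1 y.2.1 y.2.2⟩
  rw [Finset.card_image_of_injective _ (pf_strictMono m y.1 y.2.1 y.2.2).injective,
    Finset.card_univ, Fintype.card_fin]

lemma Bwd_Fwd (x : {B : Finset (Fin (L m n)) // B.card = n ∧ Good B}) :
    Bwd m n (Fwd m n x) = x := by
  obtain ⟨B, hB, hG⟩ := x
  apply Subtype.ext
  show (Finset.univ : Finset (Fin n)).image _ = B
  have hpt : ∀ i : Fin n, pf m (Fwd m n ⟨B, hB, hG⟩).1 (Fwd m n ⟨B, hB, hG⟩).2.2 i =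
      (B.orderEmbOfFin hB) i := by
    intro i
    apply Fin.ext
    show (m * n + 1 - ((Fwd m n ⟨B, hB, hG⟩).1 i.rev)) + i.val = ((B.orderEmbOfFin hB) i).val
    show (m * n + 1 - (m * n + 1 - (((B.orderEmbOfFin hB) i.rev.rev).val - i.rev.rev.val)))
        + i.val = ((B.orderEmbOfFin hB) i).val
    rw [Fin.rev_rev]
    have hup := pval_upper hB (Fin.pos i) i
    have hlow := pval_lower hB hG i
    have hge : i.val + 1 ≤ (m + 1) * (i.val + 1) := Nat.le_mul_of_pos_left _ (Nat.succ_pos m)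
    omega
  rw [Finset.image_congr (fun i _ => hpt i)]
  apply Finset.coe_injective
  rw [Finset.coe_image, Finset.coe_univ, Set.image_univ, Finset.range_orderEmbOfFin]

lemma Fwd_Bwd (y : {s : Fin n → ℕ // Monotone s ∧ ∀ j : Fin n, s j ≤ m * (j : ℕ)}) :
    Fwd m n (Bwd m n y) = y := by
  obtain ⟨s, hmono, hle⟩ := y
  apply Subtype.ext
  funext j
  have hEq : ∀ (hc : ((Finset.univ : Finset (Fin n)).image (pf m s hle)).card = n) (i : Fin n),
      (((Finset.univ : Finset (Fin n)).image (pf m s hle)).orderEmbOfFin hc) i =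
        pf m s hle i := by
    intro hc i
    exact congrFun (Finset.orderEmbOfFin_unique hc
      (fun x => Finset.mem_image_of_mem _ (Finset.mem_univ x))
      (pf_strictMono m s hmono hle)).symm i
  show m * n + 1 - ((((Finset.univ.image (pf m s hle)).orderEmbOfFin _) j.rev).val
      - j.rev.val) = s j
  generalize_proofs hc
  rw [hEq hc j.rev]
  show m * n + 1 - (((m * n + 1 - s j.rev.rev) + j.rev.val) - j.rev.val) = s j
  rw [Fin.rev_rev]
  have h1 := hle j
  have h2 : m * j.val ≤ m * n := Nat.mul_le_mul_left m (le_of_lt j.isLt)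
  omega

lemma card_good_eq_dyck :
    Nat.card {B : Finset (Fin (L m n)) // B.card = n ∧ Good B} =
      Nat.card {s : Fin n → ℕ // Monotone s ∧ ∀ j : Fin n, s j ≤ m * (j : ℕ)} :=
  Nat.card_congr ⟨Fwd m n, Bwd m n, Bwd_Fwd m n, Fwd_Bwd m n⟩

end FinalEquiv

end MDyckAux

/-- The number of m-Dyck paths of height n, encoded by weakly increasing step
sequences `(s_1, …, s_n)` of nonnegative integers with `s_i ≤ m(i-1)` (here
0-indexed: `s j ≤ m·j`), equals `(1/(mn+1))·binomial((m+1)n, n)`; equivalently,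
that number times `mn+1` equals `binomial((m+1)n, n)`. -/
theorem card_mDyck_paths (m n : ℕ) (hm : 0 < m) (hn : 0 < n) :
    Nat.card {s : Fin n → ℕ // Monotone s ∧ ∀ j : Fin n, s j ≤ m * (j : ℕ)} *
      (m * n + 1) = Nat.choose ((m + 1) * n) n := by
  have h1 : Nat.choose (MDyckAux.L m n) n =
      MDyckAux.L m n * Nat.card {s : Fin n → ℕ // Monotone s ∧ ∀ j : Fin n, s j ≤ m * (j : ℕ)} := by
    rw [MDyckAux.card_choose_eq m n, MDyckAux.card_good_eq_dyck m n]
  have hKn : (m + 1) * n = m * n + n := by ring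
  have hs1 : Nat.choose ((m + 1) * n) (m * n) = Nat.choose ((m + 1) * n) n := by
    have h := Nat.choose_symm (Nat.le_mul_of_pos_left n (Nat.succ_pos m))
    rwa [show (m + 1) * n - n = m * n by rw [hKn]; exact Nat.add_sub_cancel _ _] at h
  have hs2 : Nat.choose ((m + 1) * n + 1) (m * n + 1) = Nat.choose ((m + 1) * n + 1) n := by
    have h := Nat.choose_symm (Nat.succ_le_succ (show m * n ≤ (m + 1) * n by rw [hKn]; exact Nat.le_add_right _ n))
    rw [show (m + 1) * n + 1 - (m * n + 1) = n by
      rw [hKn, Nat.add_right_comm]; exact Nat.add_sub_cancel_left (m * n + 1) n] at h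
    exact h.symm
  have hid := Nat.add_one_mul_choose_eq ((m + 1) * n) (m * n)
  rw [hs1, hs2] at hid
  have hL : MDyckAux.L m n = (m + 1) * n + 1 := rfl
  rw [hL] at h1
  apply Nat.eq_of_mul_eq_mul_left (Nat.succ_pos ((m + 1) * n))
  calc ((m + 1) * n + 1) *
        (Nat.card {s : Fin n → ℕ // Monotone s ∧ ∀ j : Fin n, s j ≤ m * (j : ℕ)} * (m * n + 1))
      = (((m + 1) * n + 1) *
          Nat.card {s : Fin n → ℕ // Monotone s ∧ ∀ j : Fin n, s j ≤ m * (j : ℕ)}) *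
          (m * n + 1) := by ring
    _ = Nat.choose ((m + 1) * n + 1) n * (m * n + 1) := by rw [← h1]
    _ = ((m + 1) * n + 1) * Nat.choose ((m + 1) * n) n := hid.symm
end

section
/- Given an m-Dyck path D with step sequence (t_1,...,t_n) (so t_1 = 0 and t_j ≤ m(j-1)) and an integer 0 ≤ k ≤ mn, let j_0 be the unique index such that t_j + k ≤ mn for all j ≤ j_0 and t_j + k > mn for j > j_0. Then the sequence (t_{j_0+1}+k-mn-1, ..., t_n+k-mn-1, t_1+k, ..., t_{j_0}+k) is weakly increasing with all entries between 0 and mn, i.e., it is the step sequence of an N-E lattice path from (0,0) to (mn,n). -/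
/-- Given an m-Dyck path step sequence `t` (1-indexed, `t 1 = 0`, weakly
increasing, `t j ≤ m(j-1)`), an integer `0 ≤ k ≤ mn`, and the unique index `j₀`
with `t j + k ≤ mn` for `j ≤ j₀` and `t j + k > mn` for `j₀ < j ≤ n`, the
rotated sequence `(t_{j₀+1}+k-mn-1, …, t_n+k-mn-1, t_1+k, …, t_{j₀}+k)` is
weakly increasing with all entries in `[0, mn]`, i.e. it is the step sequence of
an N-E lattice path from `(0,0)` to `(mn, n)`. -/
theorem rotated_dyck_is_lattice_path (m n : ℕ) (hm : 0 < m) (hn : 0 < n)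
    (t : ℕ → ℤ) (k : ℤ) (j0 : ℕ)
    (ht1 : t 1 = 0)
    (hmono : ∀ i j, 1 ≤ i → i ≤ j → j ≤ n → t i ≤ t j)
    (hnn : ∀ j, 1 ≤ j → j ≤ n → 0 ≤ t j)
    (hdyck : ∀ j, 1 ≤ j → j ≤ n → t j ≤ (m : ℤ) * ((j : ℤ) - 1))
    (hk0 : 0 ≤ k) (hkmn : k ≤ (m : ℤ) * n)
    (hj01 : 1 ≤ j0) (hj0n : j0 ≤ n)
    (hle : ∀ j, 1 ≤ j → j ≤ j0 → t j + k ≤ (m : ℤ) * n)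
    (hgt : ∀ j, j0 < j → j ≤ n → (m : ℤ) * n < t j + k) :
    (∀ i, 1 ≤ i → i ≤ n →
      0 ≤ (if i ≤ n - j0 then t (j0 + i) + k - (m : ℤ) * n - 1
           else t (i - (n - j0)) + k) ∧
      (if i ≤ n - j0 then t (j0 + i) + k - (m : ℤ) * n - 1
       else t (i - (n - j0)) + k) ≤ (m : ℤ) * n) ∧
    (∀ i j, 1 ≤ i → i ≤ j → j ≤ n →
      (if i ≤ n - j0 then t (j0 + i) + k - (m : ℤ) * n - 1
       else t (i - (n - j0)) + k) ≤
      (if j ≤ n - j0 then t (j0 + j) + k - (m : ℤ) * n - 1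
       else t (j - (n - j0)) + k)) := by
  have key1 : ∀ i, 1 ≤ i → i ≤ n - j0 →
      0 ≤ t (j0 + i) + k - (m : ℤ) * n - 1 ∧
      t (j0 + i) + k - (m : ℤ) * n - 1 ≤ k - (m : ℤ) - 1 := by
    intro i hi1 hin
    have hji : j0 + i ≤ n := by omega
    have h1 : 1 ≤ j0 + i := by omega
    have hg := hgt (j0 + i) (by omega) hji
    have hd := hdyck (j0 + i) h1 hji
    constructor
    · omega
    · have hcast : ((j0 + i : ℕ) : ℤ) ≤ (n : ℤ) := by exact_mod_cast hji
      have : t (j0 + i) ≤ (m : ℤ) * ((n : ℤ) - 1) := by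
        calc t (j0 + i) ≤ (m : ℤ) * (((j0 + i : ℕ) : ℤ) - 1) := hd
          _ ≤ (m : ℤ) * ((n : ℤ) - 1) := by
            apply mul_le_mul_of_nonneg_left (by omega) (by positivity)
      have hmn : (m : ℤ) * ((n : ℤ) - 1) = (m : ℤ) * n - m := by ring
      omega
  have key2 : ∀ i, n - j0 < i → i ≤ n →
      0 ≤ t (i - (n - j0)) + k ∧ t (i - (n - j0)) + k ≤ (m : ℤ) * n ∧
      k ≤ t (i - (n - j0)) + k := by
    intro i hi1 hin
    have h1 : 1 ≤ i - (n - j0) := by omega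
    have h2 : i - (n - j0) ≤ j0 := by omega
    have hnn' := hnn (i - (n - j0)) h1 (by omega)
    have := hle (i - (n - j0)) h1 h2
    omega
  constructor
  · intro i hi1 hin
    by_cases h : i ≤ n - j0
    · simp only [if_pos h]
      have := key1 i hi1 h
      have hm1 : (1:ℤ) ≤ m := by exact_mod_cast hm
      omega
    · simp only [if_neg h]
      have := key2 i (by omega) hin
      omega
  · intro i j hi1 hij hjn
    by_cases hi : i ≤ n - j0
    · by_cases hj : j ≤ n - j0
      · simp only [if_pos hi, if_pos hj]
        have := hmono (j0 + i) (j0 + j) (by omega) (by omega) (by omega)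
        omega
      · simp only [if_pos hi, if_neg hj]
        have h1 := key1 i hi1 hi
        have h2 := key2 j (by omega) hjn
        have hm1 : (1:ℤ) ≤ m := by exact_mod_cast hm
        omega
    · have hj : ¬ j ≤ n - j0 := by omega
      simp only [if_neg hi, if_neg hj]
      have := hmono (i - (n - j0)) (j - (n - j0)) (by omega) (by omega) (by omega)
      omega
end

section
/- Define ψ from (pairs consisting of an integer sequence (β_1,...,β_n) with sum 0, and an integer k) to antisymmetric integer sequences of length 2n: ψ((β_i), k) is the antisymmetric sequence (γ_1,...,γ_n,-γ_n,...,-γ_1) obtained as follows. Write the multiset {i + nβ_i + k : 1 ≤ i ≤ n} in base-level form as {r_i + n·a_i} with r_i ∈ {1,...,n}, and let the expanded multiset be {r_i + 2n·a_i, (2n+1-r_i) + 2n·(-a_i) : 1 ≤ i ≤ n}; γ_j is the level of j in this expanded multiset. Then ψ is a bijection onto the set of antisymmetric level vectors (γ_1,...,γ_n,-γ_n,...,-γ_1) ∈ Z^{2n}, with inverse recovering k = γ_1 + ... + γ_n. -/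
namespace PsiAux

variable {n : ℕ}

lemma le_two_mul_n (n : ℕ) : n ≤ 2 * n := by omega

/-- Rotation of `Fin n` by an integer `k`. -/
def rot (hn : 0 < n) (k : ℤ) (i : Fin n) : Fin n :=
  ⟨((((i : ℕ) : ℤ) + k) % (n : ℤ)).toNat, by
    have h0 : (0:ℤ) < (n:ℤ) := by exact_mod_cast hn
    have h1 := Int.emod_nonneg (((i : ℕ) : ℤ) + k) h0.ne'
    have h2 := Int.emod_lt_of_pos (((i : ℕ) : ℤ) + k) h0
    omega⟩

lemma rot_coe (hn : 0 < n) (k : ℤ) (i : Fin n) :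
    (((rot hn k i : ℕ) : ℤ)) = (((i : ℕ) : ℤ) + k) % (n : ℤ) := by
  have h0 : (0:ℤ) < (n:ℤ) := by exact_mod_cast hn
  have h1 := Int.emod_nonneg (((i : ℕ) : ℤ) + k) h0.ne'
  simp [rot, Int.toNat_of_nonneg h1]

lemma rot_rot (hn : 0 < n) (a b : ℤ) (i : Fin n) :
    rot hn b (rot hn a i) = rot hn (a + b) i := by
  apply Fin.ext
  have h0 : (0:ℤ) < (n:ℤ) := by exact_mod_cast hn
  have : (((rot hn b (rot hn a i) : ℕ) : ℤ)) = (((rot hn (a+b) i : ℕ) : ℤ)) := by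
    rw [rot_coe, rot_coe, rot_coe, Int.emod_add_emod]
    ring_nf
  exact_mod_cast this

lemma rot_zero (hn : 0 < n) (i : Fin n) : rot hn 0 i = i := by
  apply Fin.ext
  have h0 : (0:ℤ) < (n:ℤ) := by exact_mod_cast hn
  have hlt : ((i : ℕ) : ℤ) < (n:ℤ) := by exact_mod_cast i.isLt
  have : (((rot hn 0 i : ℕ) : ℤ)) = ((i : ℕ) : ℤ) := by
    rw [rot_coe, add_zero, Int.emod_eq_of_lt (by positivity) hlt]
  exact_mod_cast this

/-- Rotation as an equivalence. -/
def rotE (hn : 0 < n) (k : ℤ) : Fin n ≃ Fin n where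
  toFun := rot hn k
  invFun := rot hn (-k)
  left_inv i := by rw [rot_rot, add_neg_cancel, rot_zero]
  right_inv i := by rw [rot_rot, neg_add_cancel, rot_zero]

lemma sum_emod (hn : 0 < n) (k : ℤ) :
    ∑ i : Fin n, ((((i : ℕ) : ℤ) + k) % (n : ℤ)) = ∑ i : Fin n, ((i : ℕ) : ℤ) := by
  calc ∑ i : Fin n, ((((i : ℕ) : ℤ) + k) % (n : ℤ))
      = ∑ i : Fin n, ((rotE hn k i : ℕ) : ℤ) := by
        apply Finset.sum_congr rfl
        intro i _
        rw [show (rotE hn k i) = rot hn k i from rfl, rot_coe]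
    _ = ∑ i : Fin n, ((i : ℕ) : ℤ) := Equiv.sum_comp (rotE hn k) (fun i => ((i : ℕ) : ℤ))

lemma sum_ediv (hn : 0 < n) (k : ℤ) :
    ∑ i : Fin n, ((((i : ℕ) : ℤ) + k) / (n : ℤ)) = k := by
  have h0 : (0:ℤ) < (n:ℤ) := by exact_mod_cast hn
  have key : (n:ℤ) * (∑ i : Fin n, ((((i : ℕ) : ℤ) + k) / (n : ℤ))) = (n:ℤ) * k := by
    rw [Finset.mul_sum]
    have expand : ∀ i : Fin n, (n:ℤ) * ((((i : ℕ) : ℤ) + k) / (n : ℤ))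
        = (((i : ℕ) : ℤ) + k) - ((((i : ℕ) : ℤ) + k) % (n : ℤ)) := by
      intro i
      have := Int.mul_ediv_add_emod (((i : ℕ) : ℤ) + k) (n : ℤ)
      linarith
    rw [Finset.sum_congr rfl (fun i _ => expand i), Finset.sum_sub_distrib, sum_emod hn k,
      Finset.sum_add_distrib, Finset.sum_const, Finset.card_univ, Fintype.card_fin]
    ring
  exact mul_left_cancel₀ h0.ne' key

/-- The level value of the `i`-th window entry. -/
def aval (β : Fin n → ℤ) (k : ℤ) (i : Fin n) : ℤ :=
  β i + (((i : ℕ) : ℤ) + k) / (n : ℤ)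

/-- The forward map. -/
def fwd (hn : 0 < n) (p : {β : Fin n → ℤ // ∑ i, β i = 0} × ℤ) (j : Fin (2 * n)) : ℤ :=
  if h : (j : ℕ) < n then
    aval p.1.1 p.2 (rot hn (-p.2) ⟨(j : ℕ), h⟩)
  else
    -(aval p.1.1 p.2 (rot hn (-p.2) ⟨2 * n - 1 - (j : ℕ), by have := j.isLt; omega⟩))

lemma fwd_lt (hn : 0 < n) (p : {β : Fin n → ℤ // ∑ i, β i = 0} × ℤ) (j : Fin (2 * n))
    (h : (j : ℕ) < n) :
    fwd hn p j = aval p.1.1 p.2 (rot hn (-p.2) ⟨(j : ℕ), h⟩) := dif_pos h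

lemma fwd_ge (hn : 0 < n) (p : {β : Fin n → ℤ // ∑ i, β i = 0} × ℤ) (j : Fin (2 * n))
    (h : ¬ (j : ℕ) < n) :
    fwd hn p j = -(aval p.1.1 p.2
      (rot hn (-p.2) ⟨2 * n - 1 - (j : ℕ), by have := j.isLt; omega⟩)) := dif_neg h

lemma fwd_lt' (hn : 0 < n) (p : {β : Fin n → ℤ // ∑ i, β i = 0} × ℤ) (j : Fin (2 * n))
    (m : Fin n) (h : (j : ℕ) < n) (hm : (m : ℕ) = (j : ℕ)) :
    fwd hn p j = aval p.1.1 p.2 (rot hn (-p.2) m) := by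
  rw [fwd_lt hn p j h]
  have : (⟨(j : ℕ), h⟩ : Fin n) = m := Fin.ext hm.symm
  rw [this]

lemma fwd_ge' (hn : 0 < n) (p : {β : Fin n → ℤ // ∑ i, β i = 0} × ℤ) (j : Fin (2 * n))
    (m : Fin n) (h : ¬ (j : ℕ) < n) (hm : (m : ℕ) = 2 * n - 1 - (j : ℕ)) :
    fwd hn p j = -(aval p.1.1 p.2 (rot hn (-p.2) m)) := by
  rw [fwd_ge hn p j h]
  have : (⟨2 * n - 1 - (j : ℕ), by have := j.isLt; omega⟩ : Fin n) = m := Fin.ext hm.symm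
  rw [this]

lemma fwd_antisym (hn : 0 < n) (p : {β : Fin n → ℤ // ∑ i, β i = 0} × ℤ) :
    ∀ j : Fin (2 * n), fwd hn p j = -(fwd hn p j.rev) := by
  intro j
  have hrev : (j.rev : ℕ) = 2 * n - 1 - (j : ℕ) := by
    rw [Fin.val_rev]; omega
  by_cases h : (j : ℕ) < n
  · have hr : ¬ (j.rev : ℕ) < n := by rw [hrev]; have := j.isLt; omega
    rw [fwd_lt hn p j h,
      fwd_ge' hn p j.rev ⟨(j : ℕ), h⟩ hr (by simp only [hrev]; have := j.isLt; omega), neg_neg]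
  · have hr : (j.rev : ℕ) < n := by rw [hrev]; have := j.isLt; omega
    rw [fwd_ge hn p j h,
      fwd_lt' hn p j.rev ⟨2 * n - 1 - (j : ℕ), by have := j.isLt; omega⟩ hr (by simp only [hrev])]

lemma sum_fwd (hn : 0 < n) (p : {β : Fin n → ℤ // ∑ i, β i = 0} × ℤ) :
    ∑ j : Fin n, fwd hn p (Fin.castLE (le_two_mul_n n) j) = p.2 := by
  have step : ∀ j : Fin n, fwd hn p (Fin.castLE (le_two_mul_n n) j)
      = aval p.1.1 p.2 (rot hn (-p.2) j) := by
    intro j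
    exact fwd_lt' hn p _ j (by simp [j.isLt]) (by simp)
  rw [Finset.sum_congr rfl (fun j _ => step j)]
  rw [Fintype.sum_equiv (rotE hn (-p.2)) (fun j : Fin n => aval p.1.1 p.2 (rot hn (-p.2) j))
    (aval p.1.1 p.2) (fun x => rfl)]
  unfold aval
  rw [Finset.sum_add_distrib, p.1.2, sum_ediv hn p.2, zero_add]

/-- The candidate `k` recovered from `γ`. -/
def bk (n : ℕ) (γ : Fin (2 * n) → ℤ) : ℤ :=
  ∑ j : Fin n, γ (Fin.castLE (le_two_mul_n n) j)

/-- The candidate `β` recovered from `γ`. -/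
def bβ (hn : 0 < n) (γ : Fin (2 * n) → ℤ) (i : Fin n) : ℤ :=
  γ (Fin.castLE (le_two_mul_n n) (rot hn (bk n γ) i)) - (((i : ℕ) : ℤ) + bk n γ) / (n : ℤ)

lemma sum_bβ (hn : 0 < n) (γ : Fin (2 * n) → ℤ) : ∑ i, bβ hn γ i = 0 := by
  unfold bβ
  rw [Finset.sum_sub_distrib, sum_ediv hn (bk n γ)]
  rw [Fintype.sum_equiv (rotE hn (bk n γ))
    (fun i : Fin n => γ (Fin.castLE (le_two_mul_n n) (rot hn (bk n γ) i)))
    (fun i : Fin n => γ (Fin.castLE (le_two_mul_n n) i)) (fun x => rfl)]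
  rw [show (∑ i : Fin n, γ (Fin.castLE (le_two_mul_n n) i)) = bk n γ from rfl]
  ring

end PsiAux

open PsiAux in
/-- The map ψ, sending a pair consisting of a type-A level vector
`(β_1, …, β_n)` (sum `0`) and an integer `k` to the antisymmetric level vector
of the antisymmetric expansion of the k-shifted window `{i + nβ_i + k}`, is a
bijection onto antisymmetric integer vectors `(γ_1, …, γ_{2n})` with
`γ_j = -γ_{2n+1-j}`; the inverse recovers `k = γ_1 + ⋯ + γ_n`. Here, writing
the `i`-th shifted window entry in base-level form as `r + n·a` with
`r ∈ {1, …, n}` (so `r = ((i + k) mod n) + 1` for 0-indexed `i`), the expansion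
has level `a` at position `r` and level `-a` at position `2n+1-r`. -/
theorem psi_bijection (n : ℕ) (hn : 0 < n) :
    ∃ ψ : {β : Fin n → ℤ // ∑ i, β i = 0} × ℤ ≃
          {γ : Fin (2 * n) → ℤ // ∀ j : Fin (2 * n), γ j = -γ j.rev},
      ∀ p : {β : Fin n → ℤ // ∑ i, β i = 0} × ℤ,
        (∑ j : Fin n, (ψ p).1 (Fin.castLE (by omega) j)) = p.2 ∧
        ∀ i : Fin n, ∀ j : Fin (2 * n),
          ((((j : ℕ) : ℤ) + 1 = ((((i : ℕ) : ℤ) + p.2) % (n : ℤ)) + 1 →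
            (ψ p).1 j = p.1.1 i +
              (((i : ℕ) : ℤ) + 1 + p.2 -
                (((((i : ℕ) : ℤ) + p.2) % (n : ℤ)) + 1)) / (n : ℤ)) ∧
          (((j : ℕ) : ℤ) + 1 = 2 * (n : ℤ) + 1 -
              (((((i : ℕ) : ℤ) + p.2) % (n : ℤ)) + 1) →
            (ψ p).1 j = -(p.1.1 i +
              (((i : ℕ) : ℤ) + 1 + p.2 -
                (((((i : ℕ) : ℤ) + p.2) % (n : ℤ)) + 1)) / (n : ℤ)))) := by
  have h0 : (0:ℤ) < (n:ℤ) := by exact_mod_cast hn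
  -- key simplification of the divisor expression in the statement
  have hdiv : ∀ (i : Fin n) (k : ℤ),
      (((i : ℕ) : ℤ) + 1 + k - (((((i : ℕ) : ℤ) + k) % (n : ℤ)) + 1)) / (n : ℤ)
        = (((i : ℕ) : ℤ) + k) / (n : ℤ) := by
    intro i k
    have h := Int.mul_ediv_add_emod (((i : ℕ) : ℤ) + k) (n : ℤ)
    have : ((i : ℕ) : ℤ) + 1 + k - (((((i : ℕ) : ℤ) + k) % (n : ℤ)) + 1)
        = (n : ℤ) * ((((i : ℕ) : ℤ) + k) / (n : ℤ)) := by linarith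
    rw [this, Int.mul_ediv_cancel_left _ h0.ne']
  refine ⟨{
    toFun := fun p => ⟨fwd hn p, fwd_antisym hn p⟩
    invFun := fun γ => (⟨bβ hn γ.1, sum_bβ hn γ.1⟩, bk n γ.1)
    left_inv := ?_
    right_inv := ?_ }, ?_⟩
  · -- left inverse
    rintro ⟨⟨β, hβ⟩, k⟩
    have hk : bk n (fwd hn (⟨⟨β, hβ⟩, k⟩)) = k := sum_fwd hn _
    refine Prod.ext ?_ hk
    apply Subtype.ext
    funext i
    show bβ hn (fwd hn (⟨⟨β, hβ⟩, k⟩)) i = β i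
    unfold bβ
    rw [hk]
    have hlt : ((Fin.castLE (by omega : n ≤ 2*n) (rot hn k i) : Fin (2*n)) : ℕ) < n := by
      simp only [Fin.coe_castLE]; exact (rot hn k i).isLt
    rw [fwd_lt' hn _ _ (rot hn k i) hlt (by simp)]
    show aval β k (rot hn (-k) (rot hn k i)) - (((i : ℕ) : ℤ) + k) / (n : ℤ) = β i
    rw [rot_rot, add_neg_cancel, rot_zero]
    unfold aval
    ring
  · -- right inverse
    rintro ⟨γ, hγ⟩
    apply Subtype.ext
    funext j
    show fwd hn (⟨⟨bβ hn γ, sum_bβ hn γ⟩, bk n γ⟩) j = γ j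
    set k := bk n γ with hkdef
    have haval : ∀ m : Fin n, aval (bβ hn γ) k m = γ (Fin.castLE (by omega) (rot hn k m)) := by
      intro m
      unfold aval bβ
      rw [← hkdef]
      ring
    by_cases h : (j : ℕ) < n
    · rw [fwd_lt hn _ _ h]
      show aval (bβ hn γ) k (rot hn (-k) ⟨(j : ℕ), h⟩) = γ j
      rw [haval, rot_rot, neg_add_cancel, rot_zero]
      congr 1
    · rw [fwd_ge hn _ _ h]
      show -(aval (bβ hn γ) k (rot hn (-k) ⟨2 * n - 1 - (j : ℕ), by have := j.isLt; omega⟩)) = γ j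
      rw [haval, rot_rot, neg_add_cancel, rot_zero]
      have hrev : (Fin.castLE (by omega : n ≤ 2*n)
          (⟨2 * n - 1 - (j : ℕ), by have := j.isLt; omega⟩ : Fin n)) = j.rev := by
        apply Fin.ext
        simp only [Fin.coe_castLE, Fin.val_rev]
        omega
      rw [hrev, ← hγ j]
  · -- properties
    intro p
    constructor
    · exact sum_fwd hn p
    · intro i j
      set k := p.2 with hk
      have hr0 := Int.emod_nonneg (((i : ℕ) : ℤ) + k) h0.ne'
      have hr1 := Int.emod_lt_of_pos (((i : ℕ) : ℤ) + k) h0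
      constructor
      · intro hcond
        have hj : ((j : ℕ) : ℤ) = ((((i : ℕ) : ℤ) + k) % (n : ℤ)) := by linarith
        have hjlt : (j : ℕ) < n := by omega
        show fwd hn p j = p.1.1 i + _
        have hrc : (((rot hn k i : ℕ)) : ℤ) = ((((i : ℕ) : ℤ) + k) % (n : ℤ)) := rot_coe hn k i
        rw [fwd_lt' hn p j (rot hn k i) hjlt (by omega), hdiv i k,
          rot_rot, add_neg_cancel, rot_zero]
        rfl
      · intro hcond
        have hj : ((j : ℕ) : ℤ) = 2 * (n : ℤ) - 1 - ((((i : ℕ) : ℤ) + k) % (n : ℤ)) := by linarith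
        have hjge : ¬ (j : ℕ) < n := by omega
        show fwd hn p j = -(p.1.1 i + _)
        have hrc : (((rot hn k i : ℕ)) : ℤ) = ((((i : ℕ) : ℤ) + k) % (n : ℤ)) := rot_coe hn k i
        rw [fwd_ge' hn p j (rot hn k i) hjge (by omega), hdiv i k,
          rot_rot, add_neg_cancel, rot_zero]
        rfl
end

section
/- Let T = (k_{ij})_{1 ≤ i ≤ j ≤ n} with entries defined from a sorted abacus [r_1^{ℓ_1}, ..., r_{n+1}^{ℓ_{n+1}}] (with {r_1,...,r_{n+1}} = {1,...,n+1}, ℓ's summing to 0, and r_1 + (n+1)ℓ_1 < ... < r_{n+1} + (n+1)ℓ_{n+1}) by k_{ij} = ℓ_{j+1} - ℓ_i if r_i < r_{j+1}, and k_{ij} = ℓ_{j+1} - ℓ_i - 1 if r_i > r_{j+1}. Then all entries k_{ij} are nonnegative. -/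
/-- For a sorted abacus `[r_1^{ℓ_1}, …, r_{n+1}^{ℓ_{n+1}}]` (the `r_t` a
permutation of `{1, …, n+1}`, levels summing to `0`, window entries
`r_t + (n+1)ℓ_t` strictly increasing), all Shi tableau entries
`k_{ij} = ℓ_{j+1} - ℓ_i - [r_i > r_{j+1}]` are nonnegative. -/
theorem sorted_abacus_tableau_nonneg (n : ℕ) (hn : 0 < n) (r ℓ : ℕ → ℤ)
    (hperm : ∀ v : ℤ, 1 ≤ v → v ≤ (n : ℤ) + 1 →
      ∃! t : ℕ, 1 ≤ t ∧ t ≤ n + 1 ∧ r t = v)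
    (hsum : ∑ t ∈ Finset.Icc 1 (n + 1), ℓ t = 0)
    (hsort : ∀ t u, 1 ≤ t → t < u → u ≤ n + 1 →
      r t + ((n : ℤ) + 1) * ℓ t < r u + ((n : ℤ) + 1) * ℓ u) :
    ∀ i j, 1 ≤ i → i ≤ j → j ≤ n →
      0 ≤ (if r i < r (j + 1) then ℓ (j + 1) - ℓ i else ℓ (j + 1) - ℓ i - 1) := by
  have hrng : ∀ t : ℕ, 1 ≤ t → t ≤ n + 1 → (1:ℤ) ≤ r t ∧ r t ≤ (n:ℤ) + 1 := by
    intro t ht1 ht2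
    have hsub : Finset.Icc (1:ℤ) ((n:ℤ)+1) ⊆ (Finset.Icc 1 (n+1)).image r := by
      intro v hv
      simp only [Finset.mem_Icc] at hv
      obtain ⟨u, ⟨hu1, hu2, hru⟩, _⟩ := hperm v hv.1 hv.2
      exact Finset.mem_image.2 ⟨u, Finset.mem_Icc.2 ⟨hu1, hu2⟩, hru⟩
    have hcard : ((Finset.Icc 1 (n+1) : Finset ℕ).image r).card ≤
        (Finset.Icc (1:ℤ) ((n:ℤ)+1)).card := by
      calc ((Finset.Icc 1 (n+1) : Finset ℕ).image r).card
          ≤ (Finset.Icc 1 (n+1) : Finset ℕ).card := Finset.card_image_le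
        _ = n + 1 := by simp
        _ = (Finset.Icc (1:ℤ) ((n:ℤ)+1)).card := by
            rw [Int.card_Icc]; push_cast; omega
    have heq := Finset.eq_of_subset_of_card_le hsub hcard
    have hmem : r t ∈ Finset.Icc (1:ℤ) ((n:ℤ)+1) := by
      rw [heq]; exact Finset.mem_image.2 ⟨t, Finset.mem_Icc.2 ⟨ht1, ht2⟩, rfl⟩
    simpa using Finset.mem_Icc.1 hmem
  intro i j hi hij hj
  have hlt := hsort i (j+1) hi (by omega) (by omega)
  obtain ⟨hri1, hri2⟩ := hrng i hi (by omega)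
  obtain ⟨hrj1, hrj2⟩ := hrng (j+1) (by omega) (by omega)
  have hn1 : (0:ℤ) < (n:ℤ) + 1 := by positivity
  by_cases h : r i < r (j+1)
  · simp only [if_pos h]
    nlinarith [hlt, hri1, hrj2]
  · simp only [if_neg h]
    push_neg at h
    nlinarith [hlt, h]
end

section
/- Let the abacus [r_1^{ℓ_1},...,r_{2n}^{ℓ_{2n}}] be balanced, i.e., r_i + r_{2n+1-i} = 2n+1 and ℓ_i + ℓ_{2n+1-i} = 0 for all i, with {r_1,...,r_{2n}} = {1,...,2n} and the numbers r_t + 2nℓ_t strictly increasing. Define k_{ij} (1 ≤ i ≤ j ≤ 2n-1) by k_{ij} = ℓ_{j+1} - ℓ_i if r_i < r_{j+1} and k_{ij} = ℓ_{j+1} - ℓ_i - 1 if r_i > r_{j+1}. Then the resulting tableau is self-conjugate: k_{2n-j, 2n-i} = k_{ij} for all 1 ≤ i ≤ j ≤ 2n-1. -/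
/-- For a balanced sorted abacus `[r_1^{ℓ_1}, …, r_{2n}^{ℓ_{2n}}]`
(`r_i + r_{2n+1-i} = 2n+1`, `ℓ_i + ℓ_{2n+1-i} = 0`, the `r_t` a permutation of
`{1, …, 2n}`, window entries strictly increasing), the Shi tableau
`k_{ij} = ℓ_{j+1} - ℓ_i - [r_i > r_{j+1}]` is self-conjugate:
`k_{2n-j, 2n-i} = k_{ij}` for all `1 ≤ i ≤ j ≤ 2n-1`. -/
theorem balanced_abacus_selfconjugate (n : ℕ) (hn : 0 < n) (r ℓ : ℕ → ℤ)
    (hperm : ∀ v : ℤ, 1 ≤ v → v ≤ 2 * (n : ℤ) →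
      ∃! t : ℕ, 1 ≤ t ∧ t ≤ 2 * n ∧ r t = v)
    (hsort : ∀ t u, 1 ≤ t → t < u → u ≤ 2 * n →
      r t + 2 * (n : ℤ) * ℓ t < r u + 2 * (n : ℤ) * ℓ u)
    (hbal : ∀ i, 1 ≤ i → i ≤ 2 * n →
      r i + r (2 * n + 1 - i) = 2 * (n : ℤ) + 1 ∧ ℓ i + ℓ (2 * n + 1 - i) = 0) :
    ∀ i j, 1 ≤ i → i ≤ j → j ≤ 2 * n - 1 →
      (if r (2 * n - j) < r (2 * n - i + 1)
        then ℓ (2 * n - i + 1) - ℓ (2 * n - j)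
        else ℓ (2 * n - i + 1) - ℓ (2 * n - j) - 1) =
      (if r i < r (j + 1) then ℓ (j + 1) - ℓ i else ℓ (j + 1) - ℓ i - 1) := by
  intro i j hi hij hj
  obtain ⟨hbi, hli⟩ := hbal i hi (by omega)
  obtain ⟨hbj, hlj⟩ := hbal (j + 1) (by omega) (by omega)
  have e1 : 2 * n + 1 - i = 2 * n - i + 1 := by omega
  have e2 : 2 * n + 1 - (j + 1) = 2 * n - j := by omega
  rw [e1] at hbi hli
  rw [e2] at hbj hlj
  by_cases h : r i < r (j + 1)
  · rw [if_pos h, if_pos (by linarith)]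
    linarith
  · rw [if_neg h, if_neg (by intro hc; apply h; linarith)]
    linarith
end
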